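/- Let 0 < α ≤ β with α + β = 1. For every t > 0 and every measurable function x : (0,t] → ℝ^d with x_s ≠ 0 a.e., one has ∫_0^t |x_s|^{-α} ds ≤ N (∫_0^t s^{-α}|x_s|^{-β} ds)^{α/β} t^β, where N depends only on α and β. (If α = β the inequality holds with N = 1.) -/

import Mathlib

open MeasureTheory

theorem stmt_3 (d : ℕ) (hd : 1 ≤ d) (α β : ℝ) (hα : 0 < α) (hαβ : α ≤ β)
    (hsum : α + β = 1) :
    ∃ N : ℝ, 0 < N ∧ (α = β → N = 1) ∧
      ∀ t : ℝ, 0 < t → ∀ x : ℝ → EuclideanSpace ℝ (Fin d), Measurable x →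
        (∀ᵐ s ∂(volume.restrict (Set.Ioc 0 t)), x s ≠ 0) →
        (∫⁻ s in Set.Ioc 0 t, ENNReal.ofReal (‖x s‖ ^ (-α))) ≤
          ENNReal.ofReal N *
            (∫⁻ s in Set.Ioc 0 t,
                ENNReal.ofReal (s ^ (-α) * ‖x s‖ ^ (-β))) ^ (α / β) *
            ENNReal.ofReal (t ^ β) := by
  rcases eq_or_lt_of_le hαβ with heq | hlt
  · -- Case α = β : take N = 1, use s^α ≤ t^α pointwise.
    subst heq
    refine ⟨1, one_pos, fun _ => rfl, fun t ht x hx _ => ?_⟩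
    rw [div_self hα.ne', ENNReal.rpow_one, ENNReal.ofReal_one, one_mul]
    calc ∫⁻ s in Set.Ioc 0 t, ENNReal.ofReal (‖x s‖ ^ (-α))
        ≤ ∫⁻ s in Set.Ioc 0 t,
            ENNReal.ofReal (s ^ (-α) * ‖x s‖ ^ (-α)) * ENNReal.ofReal (t ^ α) := by
          refine lintegral_mono_ae ?_
          filter_upwards [ae_restrict_mem measurableSet_Ioc] with s hs
          have hs0 : (0:ℝ) < s := hs.1
          rw [← ENNReal.ofReal_mul (by positivity)]
          refine ENNReal.ofReal_le_ofReal ?_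
          have h1 : (1:ℝ) ≤ s ^ (-α) * t ^ α := by
            have h2 : s ^ α ≤ t ^ α := Real.rpow_le_rpow hs0.le hs.2 hα.le
            have h3 : s ^ (-α) * s ^ α = 1 := by
              rw [← Real.rpow_add hs0, neg_add_cancel, Real.rpow_zero]
            calc (1:ℝ) = s ^ (-α) * s ^ α := h3.symm
              _ ≤ s ^ (-α) * t ^ α :=
                mul_le_mul_of_nonneg_left h2 (Real.rpow_nonneg hs0.le _)
          calc ‖x s‖ ^ (-α) = 1 * ‖x s‖ ^ (-α) := (one_mul _).symm
            _ ≤ (s ^ (-α) * t ^ α) * ‖x s‖ ^ (-α) :=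
                mul_le_mul_of_nonneg_right h1 (Real.rpow_nonneg (norm_nonneg _) _)
            _ = s ^ (-α) * ‖x s‖ ^ (-α) * t ^ α := by ring
      _ = (∫⁻ s in Set.Ioc 0 t, ENNReal.ofReal (s ^ (-α) * ‖x s‖ ^ (-α))) *
            ENNReal.ofReal (t ^ α) := lintegral_mul_const' _ _ ENNReal.ofReal_ne_top
  · -- Case α < β : Hölder with exponents β/α and β/(β-α).
    have hβ : (0:ℝ) < β := hα.trans hlt
    have hba : (0:ℝ) < β - α := sub_pos.mpr hlt
    set γ : ℝ := α ^ 2 / (β - α) with hγdef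
    have hγ : 0 < γ := by positivity
    have hγ1 : γ + 1 = β ^ 2 / (β - α) := by
      rw [hγdef]; field_simp [hγdef]
      nlinarith [hsum]
    refine ⟨((β - α) / β ^ 2) ^ ((β - α) / β), by positivity, fun h => absurd h hlt.ne,
      fun t ht x hx hne => ?_⟩
    set p : ℝ := β / α with hp
    set q : ℝ := β / (β - α) with hq
    have hpq : p.HolderConjugate q := by
      rw [Real.holderConjugate_iff]
      constructor
      · rw [hp]; exact (one_lt_div hα).mpr hlt
      · rw [hp, hq]
        field_simp
        ring
    set f : ℝ → ENNReal := fun s => ENNReal.ofReal ((s ^ (-α) * ‖x s‖ ^ (-β)) ^ (α / β))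
      with hf
    set g : ℝ → ENNReal := fun s => ENNReal.ofReal (s ^ (α ^ 2 / β)) with hg
    have hfm : AEMeasurable f (volume.restrict (Set.Ioc 0 t)) := by
      simp only [hf]; fun_prop
    have hgm : AEMeasurable g (volume.restrict (Set.Ioc 0 t)) := by
      simp only [hg]; fun_prop
    -- pointwise identity a.e.
    have hpt : ∀ᵐ s ∂(volume.restrict (Set.Ioc 0 t)),
        ENNReal.ofReal (‖x s‖ ^ (-α)) = (f * g) s := by
      filter_upwards [ae_restrict_mem measurableSet_Ioc, hne] with s hs hxs
      have hs0 : (0:ℝ) < s := hs.1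
      have hx0 : (0:ℝ) < ‖x s‖ := norm_pos_iff.mpr hxs
      have hu1 : (0:ℝ) ≤ s ^ (-α) := Real.rpow_nonneg hs0.le _
      have hu2 : (0:ℝ) ≤ ‖x s‖ ^ (-β) := Real.rpow_nonneg hx0.le _
      simp only [hf, hg, Pi.mul_apply]
      rw [← ENNReal.ofReal_mul (Real.rpow_nonneg (mul_nonneg hu1 hu2) _)]
      congr 1
      have e1 : (s ^ (-α) : ℝ) ^ (α / β) = s ^ (-(α ^ 2 / β)) := by
        rw [← Real.rpow_mul hs0.le]
        norm_num
        ring_nf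
      have e2 : (‖x s‖ ^ (-β) : ℝ) ^ (α / β) = ‖x s‖ ^ (-α) := by
        rw [← Real.rpow_mul hx0.le, show (-β) * (α / β) = -α by field_simp]
      have e3 : (s : ℝ) ^ (-(α ^ 2 / β)) * s ^ (α ^ 2 / β) = 1 := by
        rw [← Real.rpow_add hs0, neg_add_cancel, Real.rpow_zero]
      rw [Real.mul_rpow hu1 hu2, e1, e2]
      calc ‖x s‖ ^ (-α)
          = (s ^ (-(α ^ 2 / β)) * s ^ (α ^ 2 / β)) * ‖x s‖ ^ (-α) := by
            rw [e3, one_mul]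
        _ = s ^ (-(α ^ 2 / β)) * ‖x s‖ ^ (-α) * s ^ (α ^ 2 / β) := by ring
    have hstep1 : (∫⁻ s in Set.Ioc 0 t, ENNReal.ofReal (‖x s‖ ^ (-α))) =
        ∫⁻ s in Set.Ioc 0 t, (f * g) s := lintegral_congr_ae hpt
    have hholder := ENNReal.lintegral_mul_le_Lp_mul_Lq
      (volume.restrict (Set.Ioc 0 t)) hpq hfm hgm
    -- identify ∫ f^p
    have hfp : (∫⁻ s in Set.Ioc 0 t, f s ^ p) =
        ∫⁻ s in Set.Ioc 0 t, ENNReal.ofReal (s ^ (-α) * ‖x s‖ ^ (-β)) := by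
      refine lintegral_congr_ae ?_
      filter_upwards [ae_restrict_mem measurableSet_Ioc] with s hs
      have hs0 : (0:ℝ) < s := hs.1
      have hu : (0:ℝ) ≤ s ^ (-α) * ‖x s‖ ^ (-β) :=
        mul_nonneg (Real.rpow_nonneg hs0.le _) (Real.rpow_nonneg (norm_nonneg _) _)
      simp only [hf]
      rw [ENNReal.ofReal_rpow_of_nonneg (Real.rpow_nonneg hu _) hpq.nonneg]
      congr 1
      rw [← Real.rpow_mul hu]
      rw [show (α / β) * p = 1 by rw [hp]; field_simp]
      exact Real.rpow_one _
    -- compute ∫ g^q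
    have hgq : (∫⁻ s in Set.Ioc 0 t, g s ^ q) = ENNReal.ofReal (t ^ (γ + 1) / (γ + 1)) := by
      have hcongr : (∫⁻ s in Set.Ioc 0 t, g s ^ q) =
          ∫⁻ s in Set.Ioc 0 t, ENNReal.ofReal (s ^ γ) := by
        refine lintegral_congr_ae ?_
        filter_upwards [ae_restrict_mem measurableSet_Ioc] with s hs
        have hs0 : (0:ℝ) < s := hs.1
        simp only [hg]
        rw [ENNReal.ofReal_rpow_of_nonneg (Real.rpow_nonneg hs0.le _) hpq.symm.nonneg]
        congr 1
        rw [← Real.rpow_mul hs0.le]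
        congr 1
        rw [hq, hγdef]
        field_simp
      rw [hcongr]
      have hint : IntervalIntegrable (fun s : ℝ => s ^ γ) volume 0 t :=
        intervalIntegral.intervalIntegrable_rpow (Or.inl (by linarith))
      have hioc : IntegrableOn (fun s : ℝ => s ^ γ) (Set.Ioc 0 t) volume :=
        (intervalIntegrable_iff_integrableOn_Ioc_of_le ht.le).mp hint
      have hnn : 0 ≤ᵐ[volume.restrict (Set.Ioc 0 t)] fun s : ℝ => s ^ γ := by
        filter_upwards [ae_restrict_mem measurableSet_Ioc] with s hs
        exact Real.rpow_nonneg hs.1.le _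
      rw [← ofReal_integral_eq_lintegral_ofReal hioc hnn]
      congr 1
      have h5 := integral_rpow (a := 0) (b := t)
        (Or.inl (show (-1:ℝ) < γ by linarith))
      rw [intervalIntegral.integral_of_le ht.le] at h5
      rw [h5, Real.zero_rpow (by positivity), sub_zero]
    rw [hstep1]
    refine le_trans hholder ?_
    rw [hfp, hgq]
    have he1 : 1 / p = α / β := by rw [hp, one_div_div]
    have he2 : 1 / q = (β - α) / β := by rw [hq, one_div_div]
    rw [he1, he2]
    rw [ENNReal.ofReal_rpow_of_nonneg (by positivity) (by positivity)]
    have hreal : (t ^ (γ + 1) / (γ + 1)) ^ ((β - α) / β)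
        = ((β - α) / β ^ 2) ^ ((β - α) / β) * t ^ β := by
      have h6 : t ^ (γ + 1) / (γ + 1) = t ^ (γ + 1) * ((β - α) / β ^ 2) := by
        rw [hγ1]; field_simp
      rw [h6, Real.mul_rpow (by positivity) (by positivity),
        ← Real.rpow_mul ht.le, show (γ + 1) * ((β - α) / β) = β by
          rw [hγ1]; field_simp]
      ring
    rw [hreal, ENNReal.ofReal_mul (by positivity)]
    exact le_of_eq (by ring)
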